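/- For every natural number N ≥ 17 and every real r with 0 < r < 1, the inequality 25·N²(N−4)²/(32·(9r^{4/3} − 4r³)²) − 8(N−2/3)(N−8/3)/(5r^{8/3}) − (12/5)(N²−1)/r ≥ 0 holds, provided N ≤ 30. -/
import Mathlib

lemma key3 (N : ℕ) (hN : 17 ≤ N) (hN' : N ≤ 30) (s : ℝ) (hs0 : 0 ≤ s) (hs1 : s ≤ 1) :
    (9-4*s)^2 * (256*((N:ℝ) - 2/3)*((N:ℝ)-8/3) + 384*((N:ℝ)^2-1)*s) ≤ 125*(N:ℝ)^2*((N:ℝ)-4)^2 := by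
  interval_cases N <;> push_cast <;>
    nlinarith [sq_nonneg (s - 2/5), mul_nonneg hs0 (sub_nonneg.2 hs1), sq_nonneg (s*(1-s)),
      mul_nonneg (mul_nonneg hs0 hs0) (sub_nonneg.2 hs1)]

/-- For `17 ≤ N ≤ 30` and `0 < r < 1`,
`25 N²(N-4)²/(32 (9 r^{4/3} - 4 r³)²) - 8(N-2/3)(N-8/3)/(5 r^{8/3}) - (12/5)(N²-1)/r ≥ 0`. -/
theorem stmt3 (N : ℕ) (hN : 17 ≤ N) (hN' : N ≤ 30) (r : ℝ) (hr0 : 0 < r) (hr1 : r < 1) :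
    0 ≤ 25 * (N : ℝ)^2 * ((N : ℝ) - 4)^2 / (32 * (9 * r ^ ((4:ℝ)/3) - 4 * r^3)^2)
        - 8 * ((N : ℝ) - 2/3) * ((N : ℝ) - 8/3) / (5 * r ^ ((8:ℝ)/3))
        - (12/5) * ((N : ℝ)^2 - 1) / r := by
  set u : ℝ := r ^ ((1:ℝ)/3) with hu
  have hu0 : 0 < u := Real.rpow_pos_of_pos hr0 _
  have hu1 : u < 1 := Real.rpow_lt_one hr0.le hr1 (by norm_num)
  have h4 : r ^ ((4:ℝ)/3) = u^4 := by
    rw [hu, ← Real.rpow_natCast (r ^ ((1:ℝ)/3)) 4, ← Real.rpow_mul hr0.le]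
    norm_num
  have h8 : r ^ ((8:ℝ)/3) = u^8 := by
    rw [hu, ← Real.rpow_natCast (r ^ ((1:ℝ)/3)) 8, ← Real.rpow_mul hr0.le]
    norm_num
  have hru : r = u^3 := by
    rw [hu, ← Real.rpow_natCast (r ^ ((1:ℝ)/3)) 3, ← Real.rpow_mul hr0.le]
    norm_num
  rw [h4, h8, hru]
  have hs0 : (0:ℝ) ≤ u^5 := by positivity
  have hs1 : u^5 ≤ 1 := le_of_lt (pow_lt_one₀ hu0.le hu1 (by norm_num))
  have key := key3 N hN hN' (u^5) hs0 hs1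
  have h9 : (0:ℝ) < 9 - 4*u^5 := by nlinarith
  have hD : 9 * u^4 - 4 * (u^3)^3 = u^4 * (9 - 4*u^5) := by ring
  have hEq : 25 * (N : ℝ)^2 * ((N : ℝ) - 4)^2 / (32 * (9 * u^4 - 4 * (u^3)^3)^2)
        - 8 * ((N : ℝ) - 2/3) * ((N : ℝ) - 8/3) / (5 * u^8)
        - (12/5) * ((N : ℝ)^2 - 1) / u^3
      = (125*(N:ℝ)^2*((N:ℝ)-4)^2
          - (9-4*u^5)^2 * (256*((N:ℝ) - 2/3)*((N:ℝ)-8/3) + 384*((N:ℝ)^2-1)*(u^5)))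
        / (160 * u^8 * (9-4*u^5)^2) := by
    rw [hD]
    field_simp
    ring
  rw [hEq]
  apply div_nonneg (by linarith) (by positivity)
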